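/- Let 𝕂 be ℝ or ℂ, let 1 ≤ p, r, q_1, …, q_n < ∞, and let E_1, …, E_n, F be Banach spaces over 𝕂. For a continuous n-linear operator T : E_1 × ⋯ × E_n → F the following are equivalent: (a) for every choice of sequences (x_j^{(i)})_{j∈ℕ} in E_i with sup_{ψ∈E_i*, ‖ψ‖≤1} ∑_{j=1}^∞ |ψ(x_j^{(i)})|^{q_i} < ∞ (i = 1, …, n) and every family (φ_{j_1…j_n})_{(j_1,…,j_n)∈ℕ^n} of functionals in F* with sup_{Φ∈F**, ‖Φ‖≤1} ∑_{(j_1,…,j_n)∈ℕ^n} |Φ(φ_{j_1…j_n})|^r < ∞, one has ∑_{(j_1,…,j_n)∈ℕ^n} |φ_{j_1…j_n}(T(x_{j_1}^{(1)},…,x_{j_n}^{(n)}))|^p < ∞; (b) T is multiple (p;q_1,…,q_n;r)-summing, i.e. there exists a constant C ≥ 0 such that for every m ∈ ℕ, all x_j^{(i)} ∈ E_i (1 ≤ j ≤ m, 1 ≤ i ≤ n) and all φ_{j_1…j_n} ∈ F* ((j_1,…,j_n) ∈ {1,…,m}^n), (∑_{j_1,…,j_n=1}^m |φ_{j_1…j_n}(T(x_{j_1}^{(1)},…,x_{j_n}^{(n)}))|^p)^{1/p}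 ≤ C · ‖(φ_{j_1…j_n})_{(j_1,…,j_n)∈{1,…,m}^n}‖_{w,r} · ∏_{i=1}^n ‖(x_j^{(i)})_{j=1}^m‖_{w,q_i}. -/

import Mathlib

open scoped BigOperators
noncomputable section

/-- The weak `ℓ^q` norm of a finite family in a normed space:
`sup_{‖φ‖ ≤ 1} (∑_j |φ(x_j)|^q)^{1/q}`. -/
def weakLpNorm (𝕂 : Type*) [RCLike 𝕂] {E : Type*} [NormedAddCommGroup E] [NormedSpace 𝕂 E]
    {J : Type*} [Fintype J] (q : ℝ) (x : J → E) : ℝ :=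
  ⨆ φ : {φ : E →L[𝕂] 𝕂 // ‖φ‖ ≤ 1}, (∑ j, ‖φ.1 (x j)‖ ^ q) ^ (1 / q)

section helpers
variable {𝕂 : Type*} [RCLike 𝕂] {E : Type*} [NormedAddCommGroup E] [NormedSpace 𝕂 E]
  {J : Type*} [Fintype J] {q : ℝ}

lemma weak_bddAbove (hq : 0 < q) (x : J → E) :
    BddAbove (Set.range fun φ : {φ : E →L[𝕂] 𝕂 // ‖φ‖ ≤ 1} =>
      (∑ j, ‖φ.1 (x j)‖ ^ q) ^ (1 / q)) := by
  refine ⟨(∑ j, ‖x j‖ ^ q) ^ (1 / q), ?_⟩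
  rintro _ ⟨φ, rfl⟩
  refine Real.rpow_le_rpow (by positivity) (Finset.sum_le_sum fun j _ => ?_) (by positivity)
  refine Real.rpow_le_rpow (norm_nonneg _) ?_ hq.le
  calc ‖φ.1 (x j)‖ ≤ ‖φ.1‖ * ‖x j‖ := φ.1.le_opNorm _
    _ ≤ 1 * ‖x j‖ := by gcongr; exact φ.2
    _ = ‖x j‖ := one_mul _

lemma weakLpNorm_nonneg (x : J → E) : 0 ≤ weakLpNorm 𝕂 q x :=
  Real.iSup_nonneg fun φ => by positivity

lemma le_weakLpNorm (hq : 0 < q) (x : J → E) {φ : E →L[𝕂] 𝕂} (hφ : ‖φ‖ ≤ 1) :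
    (∑ j, ‖φ (x j)‖ ^ q) ^ (1 / q) ≤ weakLpNorm 𝕂 q x :=
  le_ciSup (weak_bddAbove hq x) (⟨φ, hφ⟩ : {φ : E →L[𝕂] 𝕂 // ‖φ‖ ≤ 1})

lemma weakLpNorm_le (x : J → E) {M : ℝ}
    (h : ∀ φ : E →L[𝕂] 𝕂, ‖φ‖ ≤ 1 → (∑ j, ‖φ (x j)‖ ^ q) ^ (1 / q) ≤ M) :
    weakLpNorm 𝕂 q x ≤ M := by
  have : Nonempty {φ : E →L[𝕂] 𝕂 // ‖φ‖ ≤ 1} := ⟨⟨0, by simp⟩⟩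
  exact ciSup_le fun φ => h φ.1 φ.2

lemma sum_le_weakLpNorm_rpow (hq : 0 < q) (x : J → E) {φ : E →L[𝕂] 𝕂} (hφ : ‖φ‖ ≤ 1) :
    ∑ j, ‖φ (x j)‖ ^ q ≤ (weakLpNorm 𝕂 q x) ^ q := by
  have h0 : (0:ℝ) ≤ ∑ j, ‖φ (x j)‖ ^ q := by positivity
  calc ∑ j, ‖φ (x j)‖ ^ q = ((∑ j, ‖φ (x j)‖ ^ q) ^ (1/q)) ^ q := by
        rw [one_div, Real.rpow_inv_rpow h0 hq.ne']
    _ ≤ (weakLpNorm 𝕂 q x) ^ q :=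
        Real.rpow_le_rpow (by positivity) (le_weakLpNorm hq x hφ) hq.le

lemma eq_zero_of_weakLpNorm_le_zero (hq : 0 < q) (x : J → E)
    (h : weakLpNorm 𝕂 q x ≤ 0) (j : J) : x j = 0 := by
  by_contra hx
  obtain ⟨g, hg1, hgx⟩ := exists_dual_vector 𝕂 (x j) (norm_ne_zero_iff.2 hx)
  have h1 : ‖x j‖ ^ q ≤ ∑ j', ‖g (x j')‖ ^ q := by
    have := Finset.single_le_sum (f := fun j' => ‖g (x j')‖ ^ q)
      (fun j' _ => by positivity) (Finset.mem_univ j)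
    simpa [hgx] using this
  have h2 : (0:ℝ) < ‖x j‖ ^ q := Real.rpow_pos_of_pos (norm_pos_iff.2 hx) _
  have h3 : (0:ℝ) < (∑ j', ‖g (x j')‖ ^ q) ^ (1/q) :=
    Real.rpow_pos_of_pos (lt_of_lt_of_le h2 h1) _
  exact absurd (le_trans (le_weakLpNorm hq x hg1.le) h) (not_le.2 h3)

end helpers

set_option maxHeartbeats 2000000 in
/-- characterization of multiple `(p;q₁,…,qₙ;r)`-summing multilinear operators:
the summability condition (a) is equivalent to the inequality condition (b). -/
theorem multiple_summing_r_iff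
    {𝕂 : Type*} [RCLike 𝕂] {n : ℕ} (hn : 1 ≤ n)
    (p r : ℝ) (q : Fin n → ℝ) (hp : 1 ≤ p) (hr : 1 ≤ r) (hq : ∀ i, 1 ≤ q i)
    (E : Fin n → Type*) [∀ i, NormedAddCommGroup (E i)] [∀ i, NormedSpace 𝕂 (E i)]
    [∀ i, CompleteSpace (E i)]
    (F : Type*) [NormedAddCommGroup F] [NormedSpace 𝕂 F] [CompleteSpace F]
    (T : ContinuousMultilinearMap 𝕂 E F) :
    (∀ (x : (i : Fin n) → ℕ → E i) (φ : (Fin n → ℕ) → (F →L[𝕂] 𝕂)),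
        (∀ i, ∃ M : ℝ, ∀ ψ : E i →L[𝕂] 𝕂, ‖ψ‖ ≤ 1 →
          ∀ s : Finset ℕ, ∑ j ∈ s, ‖ψ (x i j)‖ ^ (q i) ≤ M) →
        (∃ M : ℝ, ∀ Φ : (F →L[𝕂] 𝕂) →L[𝕂] 𝕂, ‖Φ‖ ≤ 1 →
          ∀ s : Finset (Fin n → ℕ), ∑ j ∈ s, ‖Φ (φ j)‖ ^ r ≤ M) →
        Summable (fun j : Fin n → ℕ => ‖φ j (T (fun i => x i (j i)))‖ ^ p))
    ↔
    (∃ C : ℝ, 0 ≤ C ∧ ∀ (m : ℕ) (x : (i : Fin n) → Fin m → E i)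
        (φ : (Fin n → Fin m) → (F →L[𝕂] 𝕂)),
        (∑ j : Fin n → Fin m, ‖φ j (T (fun i => x i (j i)))‖ ^ p) ^ (1 / p) ≤
          C * weakLpNorm 𝕂 r φ * ∏ i, weakLpNorm 𝕂 (q i) (x i)) := by
  have hp0 : (0:ℝ) < p := lt_of_lt_of_le one_pos hp
  have hr0 : (0:ℝ) < r := lt_of_lt_of_le one_pos hr
  have hq0 : ∀ i, (0:ℝ) < q i := fun i => lt_of_lt_of_le one_pos (hq i)
  constructor
  · classical
    intro ha
    by_contra hb
    push_neg at hb
    set i₀ : Fin n := ⟨0, hn⟩ with hi₀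
    set c : ℕ → ℝ := fun k => (1/2 : ℝ) ^ k with hc
    have hcpos : ∀ k, 0 < c k := fun k => by positivity
    have hcle1 : ∀ k, c k ≤ 1 := fun k =>
      pow_le_one₀ (by norm_num) (by norm_num)
    have hCk : ∀ k : ℕ, (0:ℝ) ≤ ((k:ℝ)+1) / (c k)^(n+1) := fun k => by positivity
    choose m X Ψ hk using fun k : ℕ => hb (((k:ℝ)+1) / (c k)^(n+1)) (hCk k)
    set Wφ : ℕ → ℝ := fun k => weakLpNorm 𝕂 r (Ψ k) with hWφdef
    set Wx : (k : ℕ) → Fin n → ℝ := fun k i => weakLpNorm 𝕂 (q i) (X k i) with hWxdef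
    -- positivity of the weak norms
    have hWφpos : ∀ k, 0 < Wφ k := by
      intro k
      rcases lt_or_ge 0 (Wφ k) with h | h
      · exact h
      · exfalso
        have hz : ∀ v, Ψ k v = 0 := fun v => eq_zero_of_weakLpNorm_le_zero hr0 (Ψ k) h v
        have h0 : (∑ j : Fin n → Fin (m k), ‖Ψ k j (T fun i => X k i (j i))‖ ^ p) ^ (1/p)
            = 0 := by
          have : ∀ j : Fin n → Fin (m k), ‖Ψ k j (T fun i => X k i (j i))‖ ^ p = 0 := by
            intro j; rw [hz j]
            simp [Real.zero_rpow hp0.ne']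
          rw [Finset.sum_congr rfl fun j _ => this j]
          simp only [Finset.sum_const, smul_zero, one_div]
          exact Real.zero_rpow (inv_ne_zero hp0.ne')
        have hkk := hk k
        rw [h0] at hkk
        rw [show weakLpNorm 𝕂 r (Ψ k) = 0 from le_antisymm h (weakLpNorm_nonneg _)] at hkk
        simp at hkk
    have hWxpos : ∀ k i, 0 < Wx k i := by
      intro k i
      rcases lt_or_ge 0 (Wx k i) with h | h
      · exact h
      · exfalso
        have hz : ∀ t, X k i t = 0 := fun t =>
          eq_zero_of_weakLpNorm_le_zero (hq0 i) (X k i) h t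
        have h0 : (∑ j : Fin n → Fin (m k), ‖Ψ k j (T fun i => X k i (j i))‖ ^ p) ^ (1/p)
            = 0 := by
          have : ∀ j : Fin n → Fin (m k), ‖Ψ k j (T fun i => X k i (j i))‖ ^ p = 0 := by
            intro j
            rw [T.map_coord_zero i (by rw [hz (j i)])]
            simp [Real.zero_rpow hp0.ne']
          rw [Finset.sum_congr rfl fun j _ => this j]
          simp only [Finset.sum_const, smul_zero, one_div]
          exact Real.zero_rpow (inv_ne_zero hp0.ne')
        have hkk := hk k
        rw [h0] at hkk
        have hprod0 : (∏ i', weakLpNorm 𝕂 (q i') (X k i')) = 0 :=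
          Finset.prod_eq_zero (Finset.mem_univ i) (le_antisymm h (weakLpNorm_nonneg _))
        rw [hprod0] at hkk
        simp at hkk
    -- scaling factors
    set εx : Fin n → ℕ → ℝ := fun i k => c k / Wx k i with hεx
    set εφ : ℕ → ℝ := fun k => c k / Wφ k with hεφ
    have hεxpos : ∀ i k, 0 < εx i k := fun i k => div_pos (hcpos k) (hWxpos k i)
    have hεφpos : ∀ k, 0 < εφ k := fun k => div_pos (hcpos k) (hWφpos k)
    -- the glued families
    set X' : (k : ℕ) → (i : Fin n) → ℕ → E i := fun k i t =>
      if h : t < m k then ((εx i k : ℝ) : 𝕂) • X k i ⟨t, h⟩ else 0 with hX'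
    set xf : (i : Fin n) → ℕ → E i :=
      fun i j => X' (Nat.unpair j).1 i (Nat.unpair j).2 with hxf
    set Ψ' : ℕ → (Fin n → ℕ) → (F →L[𝕂] 𝕂) := fun k j =>
      if h : ∀ i, (Nat.unpair (j i)).1 = k ∧ (Nat.unpair (j i)).2 < m k
      then Ψ k (fun i => ⟨(Nat.unpair (j i)).2, (h i).2⟩) else 0 with hΨ'
    set φf : (Fin n → ℕ) → (F →L[𝕂] 𝕂) := fun j =>
      ((εφ (Nat.unpair (j i₀)).1 : ℝ) : 𝕂) • Ψ' (Nat.unpair (j i₀)).1 j with hφf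
    set e : (k : ℕ) → (Fin n → Fin (m k)) → (Fin n → ℕ) :=
      fun k v i => Nat.pair k (v i) with he
    have heinj : ∀ k, Function.Injective (e k) := by
      intro k v w h
      funext i
      have := congrFun h i
      simp only [he] at this
      exact Fin.ext (Nat.pair_eq_pair.1 this).2
    -- basic computation lemmas
    have hX'in : ∀ k i (t : ℕ) (h : t < m k),
        X' k i t = ((εx i k : ℝ) : 𝕂) • X k i ⟨t, h⟩ := fun k i t h => dif_pos h
    have hX'out : ∀ k i (t : ℕ), ¬ t < m k → X' k i t = 0 := fun k i t h => dif_neg h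
    have hxfe : ∀ k (v : Fin n → Fin (m k)) i,
        xf i (e k v i) = ((εx i k : ℝ) : 𝕂) • X k i (v i) := by
      intro k v i
      simp only [hxf, he, Nat.unpair_pair]
      rw [hX'in k i (v i) (v i).isLt]
    have hΨ'e : ∀ k (v : Fin n → Fin (m k)), Ψ' k (e k v) = Ψ k v := by
      intro k v
      have hcond : ∀ i, (Nat.unpair (e k v i)).1 = k ∧ (Nat.unpair (e k v i)).2 < m k := by
        intro i; simp [he, Nat.unpair_pair]
      simp only [hΨ']
      rw [dif_pos hcond]
      congr 1
      funext i
      apply Fin.ext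
      simp [he, Nat.unpair_pair]
    have hφfe : ∀ k (v : Fin n → Fin (m k)),
        φf (e k v) = ((εφ k : ℝ) : 𝕂) • Ψ k v := by
      intro k v
      have h1 : (Nat.unpair (e k v i₀)).1 = k := by simp [he, Nat.unpair_pair]
      simp only [hφf]
      rw [h1, hΨ'e k v]
    -- hypothesis (a), first condition
    have hxcond : ∀ i, ∃ M : ℝ, ∀ ψ : E i →L[𝕂] 𝕂, ‖ψ‖ ≤ 1 →
        ∀ s : Finset ℕ, ∑ j ∈ s, ‖ψ (xf i j)‖ ^ (q i) ≤ M := by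
      intro i
      refine ⟨2, fun ψ hψ s => ?_⟩
      set K := s.sup id + 1 with hK
      have hsK : ∀ j ∈ s, j < K := fun j hj => Nat.lt_succ_of_le (Finset.le_sup (f := id) hj)
      have hsub : s ⊆ (Finset.range K ×ˢ Finset.range K).image
          (fun kt : ℕ × ℕ => Nat.pair kt.1 kt.2) := by
        intro j hj
        refine Finset.mem_image.2 ⟨((Nat.unpair j).1, (Nat.unpair j).2), ?_, Nat.pair_unpair j⟩
        exact Finset.mem_product.2 ⟨Finset.mem_range.2
          (lt_of_le_of_lt (Nat.unpair_left_le j) (hsK j hj)),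
          Finset.mem_range.2 (lt_of_le_of_lt (Nat.unpair_right_le j) (hsK j hj))⟩
      have hinner : ∀ k, ∑ t ∈ Finset.range K, ‖ψ (xf i (Nat.pair k t))‖ ^ (q i) ≤ c k := by
        intro k
        have hvan : ∀ t, ¬ t < m k → ‖ψ (xf i (Nat.pair k t))‖ ^ (q i) = 0 := by
          intro t ht
          have : xf i (Nat.pair k t) = 0 := by
            simp only [hxf, Nat.unpair_pair]
            exact hX'out k i t ht
          rw [this]
          simp [Real.zero_rpow (hq0 i).ne']
        calc ∑ t ∈ Finset.range K, ‖ψ (xf i (Nat.pair k t))‖ ^ (q i)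
            ≤ ∑ t ∈ Finset.range (max K (m k)), ‖ψ (xf i (Nat.pair k t))‖ ^ (q i) :=
              Finset.sum_le_sum_of_subset_of_nonneg
                (Finset.range_subset_range.2 (le_max_left _ _)) (fun _ _ _ => by positivity)
          _ = ∑ t ∈ Finset.range (m k), ‖ψ (xf i (Nat.pair k t))‖ ^ (q i) := by
              refine (Finset.sum_subset (Finset.range_subset_range.2 (le_max_right _ _)) ?_).symm
              intro t _ ht
              exact hvan t (fun h => ht (Finset.mem_range.2 h))
          _ = ∑ t : Fin (m k), ‖ψ (xf i (Nat.pair k (t : ℕ)))‖ ^ (q i) :=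
              (Fin.sum_univ_eq_sum_range (fun t => ‖ψ (xf i (Nat.pair k t))‖ ^ (q i)) (m k)).symm
          _ = ∑ t : Fin (m k), (εx i k) ^ (q i) * ‖ψ (X k i t)‖ ^ (q i) := by
              refine Finset.sum_congr rfl fun t _ => ?_
              have hx1 : xf i (Nat.pair k (t : ℕ)) = ((εx i k : ℝ) : 𝕂) • X k i t := by
                simp only [hxf, Nat.unpair_pair]
                rw [hX'in k i (t : ℕ) t.isLt]
              rw [hx1, map_smul, smul_eq_mul, norm_mul, RCLike.norm_ofReal,
                abs_of_pos (hεxpos i k),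
                Real.mul_rpow (hεxpos i k).le (norm_nonneg _)]
          _ = (εx i k) ^ (q i) * ∑ t : Fin (m k), ‖ψ (X k i t)‖ ^ (q i) := by
              rw [Finset.mul_sum]
          _ ≤ (εx i k) ^ (q i) * (Wx k i) ^ (q i) := by
              refine mul_le_mul_of_nonneg_left ?_ (Real.rpow_nonneg (hεxpos i k).le _)
              exact sum_le_weakLpNorm_rpow (hq0 i) (X k i) hψ
          _ = (c k) ^ (q i) := by
              rw [← Real.mul_rpow (hεxpos i k).le (weakLpNorm_nonneg _)]
              congr 1
              simp only [hεx]
              rw [div_mul_cancel₀ _ (hWxpos k i).ne']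
          _ ≤ c k := by
              have := Real.rpow_le_rpow_of_exponent_ge (hcpos k) (hcle1 k) (hq i)
              rwa [Real.rpow_one] at this
      calc ∑ j ∈ s, ‖ψ (xf i j)‖ ^ (q i)
          ≤ ∑ j ∈ (Finset.range K ×ˢ Finset.range K).image
              (fun kt : ℕ × ℕ => Nat.pair kt.1 kt.2), ‖ψ (xf i j)‖ ^ (q i) :=
            Finset.sum_le_sum_of_subset_of_nonneg hsub (fun _ _ _ => by positivity)
        _ = ∑ kt ∈ Finset.range K ×ˢ Finset.range K,
              ‖ψ (xf i (Nat.pair kt.1 kt.2))‖ ^ (q i) :=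
            Finset.sum_image (f := fun j => ‖ψ (xf i j)‖ ^ (q i))
              (fun a _ b _ h => by
                rcases Nat.pair_eq_pair.1 h with ⟨h1, h2⟩
                exact Prod.ext h1 h2)
        _ = ∑ k ∈ Finset.range K, ∑ t ∈ Finset.range K,
              ‖ψ (xf i (Nat.pair k t))‖ ^ (q i) := Finset.sum_product _ _ _
        _ ≤ ∑ k ∈ Finset.range K, c k := Finset.sum_le_sum fun k _ => hinner k
        _ ≤ 2 := sum_geometric_two_le K
    -- hypothesis (a), second condition
    have hφcond : ∃ M : ℝ, ∀ Φ : (F →L[𝕂] 𝕂) →L[𝕂] 𝕂, ‖Φ‖ ≤ 1 →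
        ∀ s : Finset (Fin n → ℕ), ∑ j ∈ s, ‖Φ (φf j)‖ ^ r ≤ M := by
      refine ⟨2, fun Φ hΦ s => ?_⟩
      set K := (s.sup fun j => j i₀) + 1 with hK
      have hsK : ∀ j ∈ s, j i₀ < K := fun j hj =>
        Nat.lt_succ_of_le (Finset.le_sup (f := fun j : Fin n → ℕ => j i₀) hj)
      set B : Finset (Fin n → ℕ) :=
        (Finset.range K).biUnion (fun k => Finset.image (e k) Finset.univ) with hB
      have hzero : ∀ j ∈ s, j ∉ s ∩ B → ‖Φ (φf j)‖ ^ r = 0 := by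
        intro j hj hjB
        by_cases hgood : ∀ i, (Nat.unpair (j i)).1 = (Nat.unpair (j i₀)).1 ∧
            (Nat.unpair (j i)).2 < m (Nat.unpair (j i₀)).1
        · exfalso
          apply hjB
          refine Finset.mem_inter.2 ⟨hj, Finset.mem_biUnion.2
            ⟨(Nat.unpair (j i₀)).1, Finset.mem_range.2
              (lt_of_le_of_lt (Nat.unpair_left_le _) (hsK j hj)), ?_⟩⟩
          refine Finset.mem_image.2 ⟨fun i => ⟨(Nat.unpair (j i)).2, (hgood i).2⟩,
            Finset.mem_univ _, ?_⟩
          funext i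
          simp only [he]
          rw [← (hgood i).1, Nat.pair_unpair]
        · have : Ψ' (Nat.unpair (j i₀)).1 j = 0 := by
            simp only [hΨ']
            exact dif_neg hgood
          have hφ0 : φf j = 0 := by
            ext y
            simp [hφf, this]
          rw [hφ0]
          simp [Real.zero_rpow hr0.ne']
      have hdisj : (↑(Finset.range K) : Set ℕ).PairwiseDisjoint
          (fun k => Finset.image (e k) Finset.univ) := by
        intro a _ b _ hab
        refine Finset.disjoint_left.2 fun j hja hjb => hab ?_
        obtain ⟨v, _, hva⟩ := Finset.mem_image.1 hja
        obtain ⟨w, _, hw⟩ := Finset.mem_image.1 hjb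
        have h1 := congrFun hva i₀
        have h2 := congrFun hw i₀
        simp only [he] at h1 h2
        have := h1.trans h2.symm
        exact (Nat.pair_eq_pair.1 this).1
      have hblock : ∀ k, ∑ j ∈ Finset.image (e k) Finset.univ, ‖Φ (φf j)‖ ^ r ≤ c k := by
        intro k
        have h1 : ∑ j ∈ Finset.image (e k) Finset.univ, ‖Φ (φf j)‖ ^ r
            = ∑ v : Fin n → Fin (m k), ‖Φ (φf (e k v))‖ ^ r :=
          Finset.sum_image (f := fun j => ‖Φ (φf j)‖ ^ r)
            (fun a _ b _ h => heinj k h)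
        rw [h1]
        have h2 : ∀ v : Fin n → Fin (m k),
            ‖Φ (φf (e k v))‖ ^ r = (εφ k) ^ r * ‖Φ (Ψ k v)‖ ^ r := by
          intro v
          rw [hφfe k v, map_smul, smul_eq_mul, norm_mul, RCLike.norm_ofReal,
            abs_of_pos (hεφpos k), Real.mul_rpow (hεφpos k).le (norm_nonneg _)]
        calc ∑ v : Fin n → Fin (m k), ‖Φ (φf (e k v))‖ ^ r
            = (εφ k) ^ r * ∑ v : Fin n → Fin (m k), ‖Φ (Ψ k v)‖ ^ r := by
              rw [Finset.sum_congr rfl fun v _ => h2 v, Finset.mul_sum]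
          _ ≤ (εφ k) ^ r * (Wφ k) ^ r := by
              refine mul_le_mul_of_nonneg_left ?_ (Real.rpow_nonneg (hεφpos k).le _)
              exact sum_le_weakLpNorm_rpow hr0 (Ψ k) hΦ
          _ = (c k) ^ r := by
              rw [← Real.mul_rpow (hεφpos k).le (weakLpNorm_nonneg _)]
              congr 1
              simp only [hεφ]
              rw [div_mul_cancel₀ _ (hWφpos k).ne']
          _ ≤ c k := by
              have := Real.rpow_le_rpow_of_exponent_ge (hcpos k) (hcle1 k) hr
              rwa [Real.rpow_one] at this
      calc ∑ j ∈ s, ‖Φ (φf j)‖ ^ r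
          = ∑ j ∈ s ∩ B, ‖Φ (φf j)‖ ^ r :=
            (Finset.sum_subset (Finset.inter_subset_left) (fun j hj hjB => hzero j hj hjB)).symm
        _ ≤ ∑ j ∈ B, ‖Φ (φf j)‖ ^ r :=
            Finset.sum_le_sum_of_subset_of_nonneg (Finset.inter_subset_right)
              (fun _ _ _ => by positivity)
        _ = ∑ k ∈ Finset.range K, ∑ j ∈ Finset.image (e k) Finset.univ, ‖Φ (φf j)‖ ^ r :=
            Finset.sum_biUnion hdisj
        _ ≤ ∑ k ∈ Finset.range K, c k := Finset.sum_le_sum fun k _ => hblock k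
        _ ≤ 2 := sum_geometric_two_le K
    -- apply (a)
    have hsum := ha xf φf hxcond hφcond
    set f : (Fin n → ℕ) → ℝ := fun j => ‖φf j (T fun i => xf i (j i))‖ ^ p with hfd
    have hf0 : ∀ j, 0 ≤ f j := fun j => by positivity
    -- block lower bound
    have hblocklow : ∀ k : ℕ, ((k:ℝ)+1) ≤ ∑ v : Fin n → Fin (m k), f (e k v) := by
      intro k
      set A : ℝ := εφ k * ∏ i, εx i k with hA
      have hApos : 0 < A := mul_pos (hεφpos k) (Finset.prod_pos fun i _ => hεxpos i k)
      have hterm : ∀ v : Fin n → Fin (m k),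
          f (e k v) = A ^ p * ‖Ψ k v (T fun i => X k i (v i))‖ ^ p := by
        intro v
        have hT : (T fun i => xf i (e k v i))
            = ((∏ i, εx i k : ℝ) : 𝕂) • (T fun i => X k i (v i)) := by
          have : (fun i => xf i (e k v i))
              = fun i => ((εx i k : ℝ) : 𝕂) • X k i (v i) := funext fun i => hxfe k v i
          rw [this, T.map_smul_univ (fun i => ((εx i k : ℝ) : 𝕂)) (fun i => X k i (v i)),
            RCLike.ofReal_prod]
        have : φf (e k v) (T fun i => xf i (e k v i))
            = ((εφ k : ℝ) : 𝕂) * (((∏ i, εx i k : ℝ) : 𝕂) * Ψ k v (T fun i => X k i (v i))) := by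
          rw [hφfe k v, hT]
          simp [smul_eq_mul, map_smul]
          ring
        simp only [hfd]
        rw [this, norm_mul, norm_mul, RCLike.norm_ofReal, RCLike.norm_ofReal,
          abs_of_pos (hεφpos k), abs_of_pos (Finset.prod_pos fun i _ => hεxpos i k),
          ← mul_assoc, hA,
          Real.mul_rpow (hApos.le) (norm_nonneg _)]
      have hS : (((k:ℝ)+1) / (c k)^(n+1) * Wφ k * ∏ i, Wx k i) ^ p
          < ∑ v : Fin n → Fin (m k), ‖Ψ k v (T fun i => X k i (v i))‖ ^ p := by
        have h1 := hk k
        have h2 : (0:ℝ) ≤ ((k:ℝ)+1) / (c k)^(n+1) * Wφ k * ∏ i, Wx k i :=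
          mul_nonneg (mul_nonneg (hCk k) (hWφpos k).le)
            (Finset.prod_nonneg fun i _ => (hWxpos k i).le)
        have h3 : (0:ℝ) ≤ ∑ v : Fin n → Fin (m k), ‖Ψ k v (T fun i => X k i (v i))‖ ^ p := by
          positivity
        have h4 := Real.rpow_lt_rpow h2 h1 hp0
        rwa [one_div, Real.rpow_inv_rpow h3 hp0.ne'] at h4
      have hcomb : ∑ v : Fin n → Fin (m k), f (e k v)
          = A ^ p * ∑ v : Fin n → Fin (m k), ‖Ψ k v (T fun i => X k i (v i))‖ ^ p := by
        rw [Finset.sum_congr rfl fun v _ => hterm v, Finset.mul_sum]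
      have hmul : A ^ p * (((k:ℝ)+1) / (c k)^(n+1) * Wφ k * ∏ i, Wx k i) ^ p
          ≤ ∑ v : Fin n → Fin (m k), f (e k v) := by
        rw [hcomb]
        exact mul_le_mul_of_nonneg_left hS.le (by positivity)
      have hval : A * (((k:ℝ)+1) / (c k)^(n+1) * Wφ k * ∏ i, Wx k i) = (k:ℝ)+1 := by
        have hprodne : (∏ i, Wx k i) ≠ 0 := (Finset.prod_pos fun i _ => hWxpos k i).ne'
        have hWφne : Wφ k ≠ 0 := (hWφpos k).ne'
        have hcne : c k ≠ 0 := (hcpos k).ne'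
        have hεxprod : (∏ i, εx i k) = (c k)^n / ∏ i, Wx k i := by
          simp only [hεx]
          rw [Finset.prod_div_distrib, Finset.prod_const, Finset.card_univ, Fintype.card_fin]
        simp only [hA, hεφ, hεxprod]
        field_simp
        ring
      have hfinal : (((k:ℝ)+1)) ^ p ≤ ∑ v : Fin n → Fin (m k), f (e k v) := by
        have h5 : A ^ p * (((k:ℝ)+1) / (c k)^(n+1) * Wφ k * ∏ i, Wx k i) ^ p
            = (((k:ℝ)+1)) ^ p := by
          rw [← Real.mul_rpow hApos.le
            (mul_nonneg (mul_nonneg (hCk k) (hWφpos k).le)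
              (Finset.prod_nonneg fun i _ => (hWxpos k i).le)), hval]
        rw [← h5]
        exact hmul
      refine le_trans ?_ hfinal
      have := Real.rpow_le_rpow_of_exponent_le (by linarith [Nat.cast_nonneg (α := ℝ) k] : (1:ℝ) ≤ (k:ℝ)+1) hp
      rwa [Real.rpow_one] at this
    -- conclude: the tsum dominates every k+1
    have htsum : ∀ k : ℕ, ((k:ℝ)+1) ≤ ∑' j, f j := by
      intro k
      refine le_trans (hblocklow k) ?_
      have h1 : ∑ v : Fin n → Fin (m k), f (e k v)
          = ∑ j ∈ Finset.image (e k) Finset.univ, f j :=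
        (Finset.sum_image (f := f) (fun a _ b _ h => heinj k h)).symm
      rw [h1]
      exact Summable.sum_le_tsum _ (fun j _ => hf0 j) hsum
    have hcontr := htsum ⌈∑' j, f j⌉₊
    have hle := Nat.le_ceil (∑' j, f j)
    have : ((⌈∑' j, f j⌉₊ : ℝ)) + 1 ≤ (⌈∑' j, f j⌉₊ : ℝ) := le_trans hcontr hle
    linarith
  · rintro ⟨C, hC0, hC⟩ x φ hx hφ
    choose Mx hMx using hx
    obtain ⟨M, hM⟩ := hφ
    have hz1 : ‖(0 : (F →L[𝕂] 𝕂) →L[𝕂] 𝕂)‖ ≤ 1 := by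
      rw [ContinuousLinearMap.opNorm_zero]; exact zero_le_one
    have hM0 : 0 ≤ M := by have := hM 0 hz1 ∅; simpa using this
    have hMx0 : ∀ i, 0 ≤ Mx i := fun i => by
      have hz2 : ‖(0 : E i →L[𝕂] 𝕂)‖ ≤ 1 := by
        rw [ContinuousLinearMap.opNorm_zero]; exact zero_le_one
      have := hMx i 0 hz2 ∅; simpa using this
    set f : (Fin n → ℕ) → ℝ := fun j => ‖φ j (T fun i => x i (j i))‖ ^ p with hf
    refine summable_of_sum_le (c := (C * M ^ (1/r) * ∏ i, (Mx i) ^ (1/(q i))) ^ p)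
      (fun j => by positivity) (fun s => ?_)
    set m := (s.sup fun j => Finset.univ.sup j) + 1 with hm
    have hjm : ∀ j ∈ s, ∀ i, j i < m := fun j hj i =>
      Nat.lt_succ_of_le (le_trans (Finset.le_sup (f := fun i => j i) (Finset.mem_univ i))
        (Finset.le_sup (f := fun j : Fin n → ℕ => Finset.univ.sup j) hj))
    set g : (Fin n → Fin m) → (Fin n → ℕ) := fun u i => (u i : ℕ) with hg
    have hginj : Function.Injective g := fun u v h => funext fun i =>
      Fin.val_injective (congrFun h i)
    have hsub : s ⊆ Finset.image g Finset.univ := fun j hj => Finset.mem_image.2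
      ⟨fun i => ⟨j i, hjm j hj i⟩, Finset.mem_univ _, rfl⟩
    have h1 : ∑ j ∈ s, f j ≤ ∑ u : Fin n → Fin m, f (g u) := by
      calc ∑ j ∈ s, f j ≤ ∑ j ∈ Finset.image g Finset.univ, f j :=
          Finset.sum_le_sum_of_subset_of_nonneg hsub (fun _ _ _ => by positivity)
        _ = ∑ u, f (g u) := Finset.sum_image (fun a _ b _ h => hginj h)
    have key := hC m (fun i t => x i (t:ℕ)) (fun u => φ (g u))
    have hWφ : weakLpNorm 𝕂 r (fun u => φ (g u)) ≤ M ^ (1/r) := by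
      refine weakLpNorm_le _ fun Φ hΦ => ?_
      refine Real.rpow_le_rpow (by positivity) ?_ (one_div_nonneg.2 hr0.le)
      calc ∑ u : Fin n → Fin m, ‖Φ (φ (g u))‖ ^ r
          = ∑ j ∈ Finset.image g Finset.univ, ‖Φ (φ j)‖ ^ r :=
            (Finset.sum_image (f := fun j => ‖Φ (φ j)‖ ^ r)
              (fun a _ b _ h => hginj h)).symm
        _ ≤ M := hM Φ hΦ _
    have hWx : ∀ i, weakLpNorm 𝕂 (q i) (fun t : Fin m => x i (t:ℕ)) ≤ (Mx i) ^ (1/(q i)) := by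
      intro i
      refine weakLpNorm_le _ fun ψ hψ => ?_
      refine Real.rpow_le_rpow (by positivity) ?_ (one_div_nonneg.2 (hq0 i).le)
      calc ∑ t : Fin m, ‖ψ (x i (t:ℕ))‖ ^ (q i)
          = ∑ t ∈ Finset.range m, ‖ψ (x i t)‖ ^ (q i) := Fin.sum_univ_eq_sum_range (fun t => ‖ψ (x i t)‖ ^ q i) m
        _ ≤ Mx i := hMx i ψ hψ _
    have hRHS : C * weakLpNorm 𝕂 r (fun u => φ (g u)) *
        ∏ i, weakLpNorm 𝕂 (q i) (fun t : Fin m => x i (t:ℕ)) ≤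
        C * M ^ (1/r) * ∏ i, (Mx i) ^ (1/(q i)) :=
      mul_le_mul (mul_le_mul le_rfl hWφ (weakLpNorm_nonneg _) hC0)
        (Finset.prod_le_prod (fun i _ => weakLpNorm_nonneg _) (fun i _ => hWx i))
        (Finset.prod_nonneg fun i _ => weakLpNorm_nonneg _) (by positivity)
    have hsum0 : (0:ℝ) ≤ ∑ u : Fin n → Fin m, f (g u) := by positivity
    have h2 : (∑ u : Fin n → Fin m, f (g u)) ^ (1/p) ≤
        C * M ^ (1/r) * ∏ i, (Mx i) ^ (1/(q i)) := le_trans key hRHS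
    have h3 : ∑ u : Fin n → Fin m, f (g u) ≤
        (C * M ^ (1/r) * ∏ i, (Mx i) ^ (1/(q i))) ^ p := by
      calc ∑ u : Fin n → Fin m, f (g u)
          = ((∑ u : Fin n → Fin m, f (g u)) ^ (1/p)) ^ p := by
            rw [one_div, Real.rpow_inv_rpow hsum0 hp0.ne']
        _ ≤ _ := Real.rpow_le_rpow (by positivity) h2 hp0.le
    exact le_trans h1 h3
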